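/- arXiv:2403.17042 — 2 statements merged into one kernel-verified Lean document; each statement's English description precedes it below -/
import Mathlib

section
/- Fix η > 0, x_noisy ∈ ℝ^d, and a probability density p⋆ on ℝ^d. Define the denoising-posterior density p_z(x) = p⋆(x + x_noisy) e^{−‖x‖²/(2η²)} / Z, where Z = ∫ p⋆(x' + x_noisy) e^{−‖x'‖²/(2η²)} dx' (assume Z > 0), and for τ > 0 define p^Z_τ(x) = ∫ p_z(w) φ_{1−e^{−2τ}}(x − e^{−τ} w) dw. Then for every τ > 0 and x ∈ ℝ^d, ∇_x log p^Z_τ(x) = − e^{2τ} x / (η² + e^{2τ} − 1) + ( e^{τ−τ̃} η² / (η² + e^{2τ} − 1) ) · s( τ̃, e^{−τ̃} x_noisy + e^{τ−τ̃} η² x / (η² + e^{2τ} − 1) ), where τ̃ = (1/2)·log( η² (e^{2τ} − 1)/(η² + e^{2τ} − 1) + 1 ). -/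
set_option maxHeartbeats 2000000
set_option synthInstance.maxHeartbeats 1000000


open MeasureTheory

/-- Centered Gaussian density on `ℝ^d` with variance `v`:
`φ_v(x) = (2πv)^{−d/2} exp(−‖x‖²/(2v))`. -/
noncomputable def gaussDensity (d : ℕ) (v : ℝ) (x : EuclideanSpace ℝ (Fin d)) : ℝ :=
  (2 * Real.pi * v) ^ (-(d : ℝ) / 2) * Real.exp (-‖x‖ ^ 2 / (2 * v))

/-- Ornstein–Uhlenbeck marginal density at time `τ` started from the density `p`:
the density of `e^{−τ} X₀ + √(1−e^{−2τ}) ε` with `X₀ ∼ p`, `ε ∼ N(0, I_d)`. -/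
noncomputable def pOU {d : ℕ} (p : EuclideanSpace ℝ (Fin d) → ℝ) (τ : ℝ)
    (x : EuclideanSpace ℝ (Fin d)) : ℝ :=
  ∫ z, p z * gaussDensity d (1 - Real.exp (-2 * τ)) (x - Real.exp (-τ) • z)

/-- Continuous-time score of the OU flow started from `p`: `s(τ, x) = ∇ₓ log p^{OU}_τ(x)`. -/
noncomputable def score {d : ℕ} (p : EuclideanSpace ℝ (Fin d) → ℝ) (τ : ℝ)
    (x : EuclideanSpace ℝ (Fin d)) : EuclideanSpace ℝ (Fin d) :=
  gradient (fun y => Real.log (pOU p τ y)) x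

/-- Heat-flow density at time `τ` started from the density `p`:
the density of `X₀ + √τ ε` with `X₀ ∼ p`, `ε ∼ N(0, I_d)`. -/
noncomputable def heatDensity {d : ℕ} (p : EuclideanSpace ℝ (Fin d) → ℝ) (τ : ℝ)
    (x : EuclideanSpace ℝ (Fin d)) : ℝ :=
  ∫ z, p z * gaussDensity d τ (x - z)

/-- Denoising-posterior density: `p_z(x) = p⋆(x + x_noisy) e^{−‖x‖²/(2η²)} / Z`. -/
noncomputable def pZ {d : ℕ} (p : EuclideanSpace ℝ (Fin d) → ℝ) (η : ℝ)
    (xn : EuclideanSpace ℝ (Fin d)) (x : EuclideanSpace ℝ (Fin d)) : ℝ :=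
  p (x + xn) * Real.exp (-‖x‖ ^ 2 / (2 * η ^ 2)) /
    ∫ x', p (x' + xn) * Real.exp (-‖x'‖ ^ 2 / (2 * η ^ 2))

/-- OU marginal started from the denoising posterior:
`p^Z_τ(x) = ∫ p_z(w) φ_{1−e^{−2τ}}(x − e^{−τ} w) dw`. -/
noncomputable def pZMarginal {d : ℕ} (p : EuclideanSpace ℝ (Fin d) → ℝ) (η : ℝ)
    (xn : EuclideanSpace ℝ (Fin d)) (τ : ℝ) (x : EuclideanSpace ℝ (Fin d)) : ℝ :=
  ∫ w, pZ p η xn w * gaussDensity d (1 - Real.exp (-2 * τ)) (x - Real.exp (-τ) • w)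

section Aux
open RealInnerProductSpace

lemma keyalg (η E Et N1 N2 I : ℝ) (hη : 0 < η) (hE : 1 < E) (hEt : 0 < Et)
    (hEt2 : Et^2 = η^2*(E^2-1)/(η^2+E^2-1) + 1) :
    -N2/(2*η^2) + -(N1 - 2*E⁻¹*I + (E⁻¹)^2*N2)/(2*(1-(E⁻¹)^2))
    = (-(E^2/(η^2+E^2-1))/2)*N1
      + -((E/Et*η^2/(η^2+E^2-1))^2*N1 - 2*((E/Et*η^2/(η^2+E^2-1))*Et⁻¹)*I
          + (Et⁻¹)^2*N2)/(2*(1-(Et⁻¹)^2)) := by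
  have hB : (0:ℝ) < η^2+E^2-1 := by nlinarith
  have hE0 : (0:ℝ) < E := by linarith
  have hE2 : (0:ℝ) < E^2-1 := by nlinarith
  have hBne : (η:ℝ)^2+E^2-1 ≠ 0 := ne_of_gt hB
  have hEne : E ≠ 0 := ne_of_gt hE0
  have hEtne : Et ≠ 0 := ne_of_gt hEt
  have hηne : η ≠ 0 := ne_of_gt hη
  have hE2ne : E^2-1 ≠ 0 := ne_of_gt hE2
  have hv : (1:ℝ)-(E⁻¹)^2 = (E^2-1)/E^2 := by field_simp
  have hEt2' : Et^2 * (η^2+E^2-1) = η^2*(E^2-1) + (η^2+E^2-1) := by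
    rw [hEt2]; field_simp
  have hvt : (1:ℝ)-(Et⁻¹)^2 = η^2*(E^2-1)/((η^2+E^2-1)*Et^2) := by
    rw [inv_pow, eq_div_iff (by positivity)]
    field_simp
    linear_combination hEt2'
  have hA : (-(1:ℝ))/(2*(1-(E⁻¹)^2))
      = (-(E^2/(η^2+E^2-1))/2)
        + (-((E/Et*η^2/(η^2+E^2-1))^2))/(2*(1-(Et⁻¹)^2)) := by
    rw [hv, hvt]; field_simp; ring
  have hBc : (2*(E:ℝ)⁻¹)/(2*(1-(E⁻¹)^2))
      = (2*((E/Et*η^2/(η^2+E^2-1))*Et⁻¹))/(2*(1-(Et⁻¹)^2)) := by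
    rw [hv, hvt]; field_simp
  have hC : -(1:ℝ)/(2*η^2) + (-((E⁻¹)^2))/(2*(1-(E⁻¹)^2))
      = (-((Et⁻¹)^2))/(2*(1-(Et⁻¹)^2)) := by
    rw [hv, hvt]; field_simp; ring
  linear_combination N1 * hA + I * hBc + N2 * hC

variable {d : ℕ}

lemma gauss_pos {v : ℝ} (hv : 0 < v) (u : EuclideanSpace ℝ (Fin d)) :
    0 < gaussDensity d v u := by
  unfold gaussDensity
  have h2 : (0:ℝ) < 2 * Real.pi * v := by positivity
  positivity

lemma gauss_le {v : ℝ} (hv : 0 < v) (u : EuclideanSpace ℝ (Fin d)) :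
    gaussDensity d v u ≤ (2 * Real.pi * v) ^ (-(d : ℝ) / 2) := by
  unfold gaussDensity
  have h2 : (0:ℝ) < (2 * Real.pi * v) ^ (-(d : ℝ) / 2) := by positivity
  nth_rewrite 2 [← mul_one ((2 * Real.pi * v) ^ (-(d : ℝ) / 2))]
  gcongr
  rw [Real.exp_le_one_iff]
  have : (0:ℝ) ≤ ‖u‖^2 := by positivity
  have : (0:ℝ) < 2*v := by linarith
  exact div_nonpos_of_nonpos_of_nonneg (by linarith [sq_nonneg ‖u‖]) this.le

lemma gauss_continuous {v : ℝ} (s : ℝ) (y : EuclideanSpace ℝ (Fin d)) :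
    Continuous (fun z : EuclideanSpace ℝ (Fin d) => gaussDensity d v (y - s • z)) := by
  unfold gaussDensity
  fun_prop

lemma gauss_decay {v : ℝ} (hv : 0 < v) {r : ℝ} (hr : 0 ≤ r) :
    r * Real.exp (-r^2/(2*v)) ≤ Real.sqrt v := by
  have hsv : 0 < Real.sqrt v := Real.sqrt_pos.mpr hv
  have hsq : Real.sqrt v ^ 2 = v := Real.sq_sqrt hv.le
  have h1 : Real.exp (-r^2/(2*v)) = (Real.exp (r^2/(2*v)))⁻¹ := by
    rw [← Real.exp_neg]; ring_nf
  have ht : 0 ≤ r^2/(2*v) := by positivity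
  have h2 : 1 + r^2/(2*v) ≤ Real.exp (r^2/(2*v)) := by
    linarith [Real.add_one_le_exp (r^2/(2*v))]
  have h3 : (Real.exp (r^2/(2*v)))⁻¹ ≤ (1 + r^2/(2*v))⁻¹ := by
    apply inv_anti₀ (by linarith) h2
  have h4 : r * (Real.exp (r^2/(2*v)))⁻¹ ≤ r * (1 + r^2/(2*v))⁻¹ := by
    apply mul_le_mul_of_nonneg_left h3 hr
  rw [h1]
  refine h4.trans ?_
  rw [← div_eq_mul_inv, div_le_iff₀ (by positivity)]
  set t := r^2/(2*v) with htdef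
  have ht2 : t * (2*v) = r^2 := by rw [htdef]; field_simp
  nlinarith [ht2, hsq, hsv, sq_nonneg (r - Real.sqrt v), mul_nonneg (mul_nonneg hsv.le hsv.le) ht]


lemma integrable_kernel {p : EuclideanSpace ℝ (Fin d) → ℝ} (hmeas : Measurable p)
    (hnonneg : ∀ x, 0 ≤ p x) (hp_int : Integrable p) {v : ℝ} (hv : 0 < v) (s : ℝ)
    (y : EuclideanSpace ℝ (Fin d)) :
    Integrable (fun z => p z * gaussDensity d v (y - s • z)) := by
  refine Integrable.mono' (hp_int.const_mul ((2 * Real.pi * v) ^ (-(d : ℝ) / 2))) ?_ ?_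
  · exact (hmeas.aestronglyMeasurable.mul (gauss_continuous s y).aestronglyMeasurable)
  · refine Filter.Eventually.of_forall fun z => ?_
    rw [Real.norm_eq_abs, abs_of_nonneg (mul_nonneg (hnonneg z) (gauss_pos hv _).le)]
    rw [mul_comm ((2 * Real.pi * v) ^ (-(d : ℝ) / 2)) (p z)]
    exact mul_le_mul_of_nonneg_left (gauss_le hv _) (hnonneg z)

lemma kernel_pos {p : EuclideanSpace ℝ (Fin d) → ℝ} (hmeas : Measurable p)
    (hnonneg : ∀ x, 0 ≤ p x) (hp_int : Integrable p) (hint : ∫ x, p x = 1)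
    {v : ℝ} (hv : 0 < v) (s : ℝ) (y : EuclideanSpace ℝ (Fin d)) :
    0 < ∫ z, p z * gaussDensity d v (y - s • z) := by
  rw [integral_pos_iff_support_of_nonneg_ae
    (Filter.Eventually.of_forall fun z => mul_nonneg (hnonneg z) (gauss_pos hv _).le)
    (integrable_kernel hmeas hnonneg hp_int hv s y)]
  have hsupp : (Function.support fun z => p z * gaussDensity d v (y - s • z))
      = Function.support p := by
    ext z
    simp only [Function.mem_support, mul_ne_zero_iff]
    exact ⟨fun h => h.1, fun h => ⟨h, (gauss_pos hv _).ne'⟩⟩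
  rw [hsupp]
  by_contra h
  push_neg at h
  have h0 : volume (Function.support p) = 0 := le_antisymm h zero_le
  have hae : ∀ᵐ z, p z = 0 := by
    rw [MeasureTheory.ae_iff]
    convert h0 using 2
    rfl
  rw [integral_congr_ae (g := fun _ => (0:ℝ)) hae, integral_zero] at hint
  norm_num at hint

lemma kernel_hasfderiv {p : EuclideanSpace ℝ (Fin d) → ℝ} {v : ℝ} (s : ℝ)
    (z y : EuclideanSpace ℝ (Fin d)) :
    HasFDerivAt (fun y' => p z * gaussDensity d v (y' - s • z))
      ((-(p z * gaussDensity d v (y - s • z) * v⁻¹)) • (innerSL ℝ (y - s • z))) y := by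
  have h1 : HasFDerivAt (fun y' : EuclideanSpace ℝ (Fin d) => ‖y' - s • z‖ ^ 2)
      (2 • ((innerSL ℝ (y - s • z)).comp (ContinuousLinearMap.id ℝ _))) y := by
    have := ((hasFDerivAt_id (𝕜 := ℝ) y).sub_const (s • z)).norm_sq
    simpa using this
  have h3 := ((h1.neg.mul_const ((2*v)⁻¹)).exp.const_mul
      ((2 * Real.pi * v) ^ (-(d:ℝ)/2))).const_mul (p z)
  have hfun : (fun y' => p z * gaussDensity d v (y' - s • z))
      = fun y' => p z * ((2 * Real.pi * v) ^ (-(d:ℝ)/2) *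
          Real.exp (-‖y' - s • z‖ ^ 2 * (2*v)⁻¹)) := by
    funext y'; rw [gaussDensity, div_eq_mul_inv (-‖y' - s • z‖ ^ 2) (2*v)]
  rw [hfun]
  refine h3.congr_fderiv ?_
  ext u
  simp only [ContinuousLinearMap.smul_apply, ContinuousLinearMap.neg_apply,
    ContinuousLinearMap.comp_apply, ContinuousLinearMap.coe_smul', Pi.smul_apply,
    ContinuousLinearMap.id_apply, innerSL_apply_apply, smul_eq_mul, gaussDensity, Pi.neg_apply,
    div_eq_mul_inv]
  ring

lemma kernel_diffAt {p : EuclideanSpace ℝ (Fin d) → ℝ} (hmeas : Measurable p)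
    (hnonneg : ∀ x, 0 ≤ p x) (hp_int : Integrable p) {v : ℝ} (hv : 0 < v) (s : ℝ)
    (y₀ : EuclideanSpace ℝ (Fin d)) :
    DifferentiableAt ℝ (fun y => ∫ z, p z * gaussDensity d v (y - s • z)) y₀ := by
  set C := (2 * Real.pi * v) ^ (-(d:ℝ)/2) * Real.sqrt v / v with hC
  have hCv : (0:ℝ) < (2 * Real.pi * v) ^ (-(d:ℝ)/2) := by positivity
  have key := hasFDerivAt_integral_of_dominated_of_fderiv_le (𝕜 := ℝ) (μ := volume)
    (x₀ := y₀)
    (F := fun y z => p z * gaussDensity d v (y - s • z))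
    (F' := fun y z => (-(p z * gaussDensity d v (y - s • z) * v⁻¹)) • (innerSL ℝ (y - s • z)))
    (bound := fun z => C * p z) (s := Set.univ) Filter.univ_mem
    (Filter.Eventually.of_forall fun y =>
      (hmeas.aestronglyMeasurable.mul (gauss_continuous s y).aestronglyMeasurable))
    (integrable_kernel hmeas hnonneg hp_int hv s y₀)
    ?_ ?_ (hp_int.const_mul C)
    (Filter.Eventually.of_forall fun z y _ => kernel_hasfderiv s z y)
  · exact key.differentiableAt
  · refine AEStronglyMeasurable.fun_smul ?_ ?_
    · exact ((hmeas.aestronglyMeasurable.mul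
        (gauss_continuous s y₀).aestronglyMeasurable).mul_const _).neg
    · exact (((innerSL ℝ).continuous).comp
        (continuous_const.sub (continuous_id.const_smul s))).aestronglyMeasurable
  · refine Filter.Eventually.of_forall fun z y _ => ?_
    show ‖(-(p z * gaussDensity d v (y - s • z) * v⁻¹)) • (innerSL ℝ (y - s • z))‖ ≤ C * p z
    refine le_trans (norm_smul_le (-(p z * gaussDensity d v (y - s • z) * v⁻¹))
      (innerSL ℝ (y - s • z))) ?_
    rw [innerSL_apply_norm, Real.norm_eq_abs, abs_neg,
      abs_of_nonneg (mul_nonneg (mul_nonneg (hnonneg z) (gauss_pos hv _).le)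
        (inv_nonneg.mpr hv.le))]
    have hd : gaussDensity d v (y - s • z) * ‖y - s • z‖
        ≤ (2 * Real.pi * v) ^ (-(d:ℝ)/2) * Real.sqrt v := by
      rw [gaussDensity, mul_assoc]
      refine mul_le_mul_of_nonneg_left ?_ hCv.le
      rw [mul_comm]
      exact gauss_decay hv (norm_nonneg _)
    have h2 : p z * gaussDensity d v (y - s • z) * v⁻¹ * ‖y - s • z‖
        = (p z * v⁻¹) * (gaussDensity d v (y - s • z) * ‖y - s • z‖) := by ring
    rw [h2, hC]
    have h3 : (p z * v⁻¹) * (gaussDensity d v (y - s • z) * ‖y - s • z‖)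
        ≤ (p z * v⁻¹) * ((2 * Real.pi * v) ^ (-(d:ℝ)/2) * Real.sqrt v) :=
      mul_le_mul_of_nonneg_left hd (mul_nonneg (hnonneg z) (inv_nonneg.mpr hv.le))
    refine h3.trans (le_of_eq ?_)
    field_simp

end Aux


/-- Score of the OU flow started from the denoising posterior, expressed through the
unconditional score `s` of the prior `p⋆`. -/

theorem stmt2 {d : ℕ} (p : EuclideanSpace ℝ (Fin d) → ℝ)
    (hmeas : Measurable p) (hnonneg : ∀ x, 0 ≤ p x) (hint : ∫ x, p x = 1)
    (η : ℝ) (hη : 0 < η) (xn : EuclideanSpace ℝ (Fin d))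
    (hZ : 0 < ∫ x', p (x' + xn) * Real.exp (-‖x'‖ ^ 2 / (2 * η ^ 2)))
    (τ : ℝ) (hτ : 0 < τ)
    (τt : ℝ)
    (hτt : τt = (1 / 2) *
      Real.log (η ^ 2 * (Real.exp (2 * τ) - 1) / (η ^ 2 + Real.exp (2 * τ) - 1) + 1))
    (x : EuclideanSpace ℝ (Fin d)) :
    gradient (fun y => Real.log (pZMarginal p η xn τ y)) x
      = -(Real.exp (2 * τ) / (η ^ 2 + Real.exp (2 * τ) - 1)) • x
        + (Real.exp (τ - τt) * η ^ 2 / (η ^ 2 + Real.exp (2 * τ) - 1)) •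
            score p τt
              (Real.exp (-τt) • xn
                + (Real.exp (τ - τt) * η ^ 2 / (η ^ 2 + Real.exp (2 * τ) - 1)) • x) := by
  classical
  have hE1 : (1:ℝ) < Real.exp τ := by
    have := Real.exp_lt_exp.mpr hτ
    simpa using this
  have hE0 : (0:ℝ) < Real.exp τ := Real.exp_pos τ
  have hEt0 : (0:ℝ) < Real.exp τt := Real.exp_pos τt
  have hp2 : Real.exp (2*τ) = (Real.exp τ)^2 := by rw [two_mul, Real.exp_add, sq]
  have hB0 : (0:ℝ) < η^2 + Real.exp (2*τ) - 1 := by rw [hp2]; nlinarith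
  have hE2m1 : (0:ℝ) < (Real.exp τ)^2 - 1 := by nlinarith
  have hA1 : (1:ℝ) < η^2 * (Real.exp (2*τ) - 1) / (η^2 + Real.exp (2*τ) - 1) + 1 := by
    have h1 : 0 < η^2 * (Real.exp (2*τ) - 1) / (η^2 + Real.exp (2*τ) - 1) := by
      apply div_pos ?_ hB0
      rw [hp2]
      exact mul_pos (pow_pos hη 2) hE2m1
    linarith
  have hA0 : (0:ℝ) < η^2 * (Real.exp (2*τ) - 1) / (η^2 + Real.exp (2*τ) - 1) + 1 := by
    linarith
  have hτt0 : 0 < τt := by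
    rw [hτt]
    have := Real.log_pos hA1
    linarith
  have hmτ : Real.exp (-τ) = (Real.exp τ)⁻¹ := Real.exp_neg τ
  have hmτt : Real.exp (-τt) = (Real.exp τt)⁻¹ := Real.exp_neg τt
  have hm2 : Real.exp (-2*τ) = ((Real.exp τ)⁻¹)^2 := by
    rw [show (-2*τ) = (-τ) + (-τ) by ring, Real.exp_add, Real.exp_neg, ← sq]
  have hm2t : Real.exp (-2*τt) = ((Real.exp τt)⁻¹)^2 := by
    rw [show (-2*τt) = (-τt) + (-τt) by ring, Real.exp_add, Real.exp_neg, ← sq]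
  have hv0 : (0:ℝ) < 1 - Real.exp (-2*τ) := by
    rw [hm2]
    have h2 : (Real.exp τ)⁻¹ < 1 := by
      rw [inv_lt_one_iff₀]; right; exact hE1
    nlinarith [inv_pos.mpr hE0]
  have hEt2 : (Real.exp τt)^2 = η^2*((Real.exp τ)^2-1)/(η^2+(Real.exp τ)^2-1) + 1 := by
    rw [← hp2]
    rw [show (Real.exp τt)^2 = Real.exp (2*τt) by rw [two_mul, Real.exp_add, sq]]
    rw [hτt, show (2:ℝ)*(1/2*Real.log (η ^ 2 * (Real.exp (2 * τ) - 1)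
      / (η ^ 2 + Real.exp (2 * τ) - 1) + 1))
      = Real.log (η ^ 2 * (Real.exp (2 * τ) - 1) / (η ^ 2 + Real.exp (2 * τ) - 1) + 1) by ring]
    exact Real.exp_log hA0
  have hvt0 : (0:ℝ) < 1 - Real.exp (-2*τt) := by
    have h1 : Real.exp (-2*τt) < 1 := by
      have := Real.exp_lt_exp.mpr (show -2*τt < 0 by linarith)
      simpa using this
    linarith
  have hp_int : Integrable p := by
    by_contra h
    rw [integral_undef h] at hint
    norm_num at hint
  set Z := ∫ x', p (x' + xn) * Real.exp (-‖x'‖ ^ 2 / (2 * η ^ 2)) with hZdef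
  set cc := Real.exp (τ - τt) * η ^ 2 / (η ^ 2 + Real.exp (2 * τ) - 1) with hccdef
  set Cv := (2 * Real.pi * (1 - Real.exp (-2 * τ))) ^ (-(d:ℝ) / 2) with hCvdef
  set Cvt := (2 * Real.pi * (1 - Real.exp (-2 * τt))) ^ (-(d:ℝ) / 2) with hCvtdef
  set qq := -(Real.exp (2*τ) / (η^2 + Real.exp (2*τ) - 1)) / 2 with hqqdef
  have hcc0 : 0 < cc := by
    rw [hccdef]
    exact div_pos (mul_pos (Real.exp_pos _) (by positivity)) hB0
  have hCv0 : 0 < Cv := by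
    rw [hCvdef]
    exact Real.rpow_pos_of_pos (mul_pos (by positivity) hv0) _
  have hCvt0 : 0 < Cvt := by
    rw [hCvtdef]
    exact Real.rpow_pos_of_pos (mul_pos (by positivity) hvt0) _
  have hccalt : cc = Real.exp τ / Real.exp τt * η^2 / (η^2 + (Real.exp τ)^2 - 1) := by
    rw [hccdef, Real.exp_sub, hp2]
  have hqqalt : qq = -((Real.exp τ)^2/(η^2+(Real.exp τ)^2-1))/2 := by rw [hqqdef, hp2]
  have hfactor : ∀ y' : EuclideanSpace ℝ (Fin d),
      pZMarginal p η xn τ y'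
        = (Cv / (Z * Cvt) * Real.exp (qq * ‖y'‖ ^ 2)) *
            pOU p τt (Real.exp (-τt) • xn + cc • y') := by
    intro y'
    have hptw : ∀ w : EuclideanSpace ℝ (Fin d),
        pZ p η xn w * gaussDensity d (1 - Real.exp (-2 * τ)) (y' - Real.exp (-τ) • w)
          = (Cv / (Z * Cvt) * Real.exp (qq * ‖y'‖ ^ 2)) *
              (p (w + xn) * gaussDensity d (1 - Real.exp (-2 * τt))
                ((Real.exp (-τt) • xn + cc • y') - Real.exp (-τt) • (w + xn))) := by
      intro w
      have hvec : (Real.exp (-τt) • xn + cc • y') - Real.exp (-τt) • (w + xn)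
          = cc • y' - Real.exp (-τt) • w := by
        rw [smul_add]; abel
      rw [hvec]
      have hexp : Real.exp (-‖w‖ ^ 2 / (2 * η ^ 2))
            * Real.exp (-‖y' - Real.exp (-τ) • w‖ ^ 2 / (2 * (1 - Real.exp (-2 * τ))))
          = Real.exp (qq * ‖y'‖ ^ 2)
            * Real.exp (-‖cc • y' - Real.exp (-τt) • w‖ ^ 2
                / (2 * (1 - Real.exp (-2 * τt)))) := by
        rw [← Real.exp_add, ← Real.exp_add]
        congr 1
        rw [hmτ, hmτt, hm2, hm2t, hqqalt, hccalt]
        have hn1 : ‖y' - (Real.exp τ)⁻¹ • w‖ ^ 2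
            = ‖y'‖ ^ 2 - 2*((Real.exp τ)⁻¹ * (inner ℝ y' w : ℝ)) + ((Real.exp τ)⁻¹)^2*‖w‖ ^ 2 := by
          rw [norm_sub_sq_real, real_inner_smul_right, norm_smul, Real.norm_eq_abs,
            abs_of_pos (inv_pos.mpr hE0)]
          ring
        have hcpos : (0:ℝ) < Real.exp τ / Real.exp τt * η^2 / (η^2 + (Real.exp τ)^2 - 1) := by
          apply div_pos (mul_pos (div_pos hE0 hEt0) (by positivity)) (by nlinarith)
        have hn2 : ‖(Real.exp τ / Real.exp τt * η^2 / (η^2 + (Real.exp τ)^2 - 1)) • y'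
              - (Real.exp τt)⁻¹ • w‖ ^ 2
            = (Real.exp τ / Real.exp τt * η^2 / (η^2 + (Real.exp τ)^2 - 1))^2*‖y'‖ ^ 2
              - 2*((Real.exp τ / Real.exp τt * η^2 / (η^2 + (Real.exp τ)^2 - 1))
                  * (Real.exp τt)⁻¹ * (inner ℝ y' w : ℝ))
              + ((Real.exp τt)⁻¹)^2*‖w‖ ^ 2 := by
          rw [norm_sub_sq_real, real_inner_smul_left, real_inner_smul_right, norm_smul,
            norm_smul, Real.norm_eq_abs, Real.norm_eq_abs,
            abs_of_pos (inv_pos.mpr hEt0), abs_of_pos hcpos]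
          ring
        rw [hn1, hn2]
        linear_combination keyalg η (Real.exp τ) (Real.exp τt) (‖y'‖ ^ 2) (‖w‖ ^ 2)
          (inner ℝ y' w : ℝ) hη hE1 hEt0 hEt2
      simp only [pZ]
      rw [← hZdef]
      simp only [gaussDensity]
      rw [← hCvdef, ← hCvtdef]
      have hZne : Z ≠ 0 := ne_of_gt hZ
      have hK : Cv / (Z * Cvt) * Cvt = Cv / Z := by field_simp
      calc p (w + xn) * Real.exp (-‖w‖ ^ 2 / (2 * η ^ 2)) / Z
            * (Cv * Real.exp (-‖y' - Real.exp (-τ) • w‖ ^ 2 / (2 * (1 - Real.exp (-2 * τ)))))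
          = p (w + xn) * Cv / Z
            * (Real.exp (-‖w‖ ^ 2 / (2 * η ^ 2))
              * Real.exp (-‖y' - Real.exp (-τ) • w‖ ^ 2
                  / (2 * (1 - Real.exp (-2 * τ))))) := by ring
        _ = p (w + xn) * Cv / Z
            * (Real.exp (qq * ‖y'‖ ^ 2)
              * Real.exp (-‖cc • y' - Real.exp (-τt) • w‖ ^ 2
                  / (2 * (1 - Real.exp (-2 * τt))))) := by rw [hexp]
        _ = Cv / (Z * Cvt) * Real.exp (qq * ‖y'‖ ^ 2)
            * (p (w + xn) * (Cvt * Real.exp (-‖cc • y' - Real.exp (-τt) • w‖ ^ 2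
                  / (2 * (1 - Real.exp (-2 * τt)))))) := by
            linear_combination (-(p (w + xn)) * Real.exp (qq * ‖y'‖ ^ 2)
              * Real.exp (-‖cc • y' - Real.exp (-τt) • w‖ ^ 2
                  / (2 * (1 - Real.exp (-2 * τt))))) * hK
    simp only [pZMarginal]
    rw [show (fun w => pZ p η xn w
          * gaussDensity d (1 - Real.exp (-2 * τ)) (y' - Real.exp (-τ) • w))
        = fun w => (Cv / (Z * Cvt) * Real.exp (qq * ‖y'‖ ^ 2)) *
            (p (w + xn) * gaussDensity d (1 - Real.exp (-2 * τt))
              ((Real.exp (-τt) • xn + cc • y') - Real.exp (-τt) • (w + xn)))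
      from funext hptw]
    rw [MeasureTheory.integral_const_mul]
    congr 1
    simp only [pOU]
    exact integral_add_right_eq_self (fun z => p z * gaussDensity d (1 - Real.exp (-2 * τt))
      ((Real.exp (-τt) • xn + cc • y') - Real.exp (-τt) • z)) xn
  have hpOUpos : ∀ u, 0 < pOU p τt u := fun u => by
    simp only [pOU]
    exact kernel_pos hmeas hnonneg hp_int hint hvt0 (Real.exp (-τt)) u
  have hpOUdiff : DifferentiableAt ℝ (pOU p τt) (Real.exp (-τt) • xn + cc • x) :=
    kernel_diffAt hmeas hnonneg hp_int hvt0 (Real.exp (-τt)) (Real.exp (-τt) • xn + cc • x)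
  have hloggrad : HasGradientAt (fun u => Real.log (pOU p τt u))
      (score p τt (Real.exp (-τt) • xn + cc • x)) (Real.exp (-τt) • xn + cc • x) := by
    have hdl : DifferentiableAt ℝ (fun u => Real.log (pOU p τt u))
        (Real.exp (-τt) • xn + cc • x) :=
      hpOUdiff.log (hpOUpos _).ne'
    have := hdl.hasGradientAt
    simpa [score] using this
  have hK0 : (0:ℝ) < Cv / (Z * Cvt) := div_pos hCv0 (mul_pos hZ hCvt0)
  have hlog : (fun y => Real.log (pZMarginal p η xn τ y))
      = fun y => Real.log (Cv / (Z * Cvt)) + qq * ‖y‖ ^ 2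
          + Real.log (pOU p τt (Real.exp (-τt) • xn + cc • y)) := by
    funext y
    rw [hfactor y, Real.log_mul (mul_pos hK0 (Real.exp_pos _)).ne' (hpOUpos _).ne',
      Real.log_mul hK0.ne' (Real.exp_pos _).ne', Real.log_exp]
  rw [hlog]
  have hsq : HasFDerivAt
      (fun y : EuclideanSpace ℝ (Fin d) => Real.log (Cv / (Z * Cvt)) + qq * ‖y‖ ^ 2)
      (InnerProductSpace.toDual ℝ _ ((2*qq) • x)) x := by
    have h := ((hasStrictFDerivAt_norm_sq x).hasFDerivAt.const_mul qq).const_add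
      (Real.log (Cv / (Z * Cvt)))
    refine h.congr_fderiv ?_
    ext u
    simp [InnerProductSpace.toDual_apply_apply, real_inner_smul_left, smul_eq_mul]
    ring
  have haff : HasFDerivAt (fun y : EuclideanSpace ℝ (Fin d) => Real.exp (-τt) • xn + cc • y)
      (cc • ContinuousLinearMap.id ℝ (EuclideanSpace ℝ (Fin d))) x :=
    ((hasFDerivAt_id x).const_smul cc).const_add (Real.exp (-τt) • xn)
  have hcomp : HasFDerivAt
      (fun y : EuclideanSpace ℝ (Fin d) =>
        Real.log (pOU p τt (Real.exp (-τt) • xn + cc • y)))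
      ((InnerProductSpace.toDual ℝ _ (score p τt (Real.exp (-τt) • xn + cc • x))).comp
        (cc • ContinuousLinearMap.id ℝ (EuclideanSpace ℝ (Fin d)))) x :=
    by have := (hloggrad.hasFDerivAt).comp x haff; exact this
  have htot : HasFDerivAt
      (fun y : EuclideanSpace ℝ (Fin d) => Real.log (Cv / (Z * Cvt)) + qq * ‖y‖ ^ 2
        + Real.log (pOU p τt (Real.exp (-τt) • xn + cc • y)))
      (InnerProductSpace.toDual ℝ _
        ((2*qq) • x + cc • score p τt (Real.exp (-τt) • xn + cc • x))) x := by
    refine (hsq.add hcomp).congr_fderiv ?_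
    ext u
    simp [InnerProductSpace.toDual_apply_apply, real_inner_smul_left, inner_add_left]
  have hgrad : HasGradientAt
      (fun y : EuclideanSpace ℝ (Fin d) => Real.log (Cv / (Z * Cvt)) + qq * ‖y‖ ^ 2
        + Real.log (pOU p τt (Real.exp (-τt) • xn + cc • y)))
      ((2*qq) • x + cc • score p τt (Real.exp (-τt) • xn + cc • x)) x :=
    hasGradientAt_iff_hasFDerivAt.mpr htot
  rw [hgrad.gradient]
  have h2q : ((2:ℝ)*qq) = -(Real.exp (2*τ) / (η^2 + Real.exp (2*τ) - 1)) := by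
    rw [hqqdef]; ring
  rw [h2q]
end

section
/- Fix η > 0, x_noisy ∈ ℝ^d, τ > 0, and a probability density p⋆ on ℝ^d. With p_z(x) = p⋆(x + x_noisy) e^{−‖x‖²/(2η²)} / Z (Z = ∫ p⋆(x' + x_noisy) e^{−‖x'‖²/(2η²)} dx' > 0), p^Z_τ(x) = ∫ p_z(w) φ_{1−e^{−2τ}}(x − e^{−τ} w) dw, and τ̃ = (1/2)·log( η² (e^{2τ} − 1)/(η² + e^{2τ} − 1) + 1 ), there exists a constant c > 0 (depending on p⋆, η, x_noisy, τ but not on x) such that for every x ∈ ℝ^d: p^Z_τ(x) = c · exp( − e^{2τ} ‖x‖² / (2(η² + e^{2τ} − 1)) ) · p^{OU}_{τ̃}( e^{−τ̃} x_noisy + e^{τ−τ̃} η² x / (η² + e^{2τ} − 1) ). -/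
open MeasureTheory

lemma key_alg (η A K nu nx ip : ℝ) (hη : 0 < η) (hA : 1 < A)
    (hKdef : K = η ^ 2 * (A ^ 2 - 1) / (η ^ 2 + A ^ 2 - 1) + 1) :
    -nu / (2 * η ^ 2) + -(nx - 2 * A⁻¹ * ip + (A⁻¹) ^ 2 * nu) / (2 * (1 - ((A ^ 2)⁻¹)))
      = -(A ^ 2 * nx) / (2 * (η ^ 2 + A ^ 2 - 1))
        + -(K⁻¹ *
              (nu - 2 * (A * η ^ 2 / (η ^ 2 + A ^ 2 - 1)) * ip
                + (A * η ^ 2 / (η ^ 2 + A ^ 2 - 1)) ^ 2 * nx))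
            / (2 * (1 - K⁻¹)) := by
  subst hKdef
  have hA0 : (0:ℝ) < A := by linarith
  have hS : (0:ℝ) < η ^ 2 + A ^ 2 - 1 := by nlinarith
  have hA1 : (0:ℝ) < A ^ 2 - 1 := by nlinarith
  have hK1 : (0:ℝ) < η ^ 2 * (A ^ 2 - 1) / (η ^ 2 + A ^ 2 - 1) := by positivity
  have h1 : 1 - (η ^ 2 * (A ^ 2 - 1) / (η ^ 2 + A ^ 2 - 1) + 1)⁻¹
      = (η ^ 2 * (A ^ 2 - 1) / (η ^ 2 + A ^ 2 - 1)) /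
        (η ^ 2 * (A ^ 2 - 1) / (η ^ 2 + A ^ 2 - 1) + 1) := by
    field_simp; ring
  have h2 : 1 - ((A:ℝ) ^ 2)⁻¹ = (A ^ 2 - 1) / A ^ 2 := by field_simp
  rw [h1, h2]
  have hK : (0:ℝ) < η ^ 2 * (A ^ 2 - 1) / (η ^ 2 + A ^ 2 - 1) + 1 := by linarith
  field_simp
  ring

/-- `p^Z_τ` factorizes, up to a positive constant, as a Gaussian factor times the OU marginal
of the prior evaluated at a rescaled/recentred point. -/
theorem stmt3 {d : ℕ} (p : EuclideanSpace ℝ (Fin d) → ℝ)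
    (hmeas : Measurable p) (hnonneg : ∀ x, 0 ≤ p x) (hint : ∫ x, p x = 1)
    (η : ℝ) (hη : 0 < η) (xn : EuclideanSpace ℝ (Fin d))
    (hZ : 0 < ∫ x', p (x' + xn) * Real.exp (-‖x'‖ ^ 2 / (2 * η ^ 2)))
    (τ : ℝ) (hτ : 0 < τ)
    (τt : ℝ)
    (hτt : τt = (1 / 2) *
      Real.log (η ^ 2 * (Real.exp (2 * τ) - 1) / (η ^ 2 + Real.exp (2 * τ) - 1) + 1)) :
    ∃ c : ℝ, 0 < c ∧ ∀ x : EuclideanSpace ℝ (Fin d),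
      pZMarginal p η xn τ x
        = c * Real.exp (-(Real.exp (2 * τ) * ‖x‖ ^ 2) / (2 * (η ^ 2 + Real.exp (2 * τ) - 1))) *
            pOU p τt
              (Real.exp (-τt) • xn
                + (Real.exp (τ - τt) * η ^ 2 / (η ^ 2 + Real.exp (2 * τ) - 1)) • x) := by
  set Z := ∫ x', p (x' + xn) * Real.exp (-‖x'‖ ^ 2 / (2 * η ^ 2)) with hZdef
  set A := Real.exp τ with hAdef
  have hA : 1 < A := by
    rw [hAdef, ← Real.exp_zero]; exact Real.exp_lt_exp.2 hτ
  have hA0 : (0:ℝ) < A := by linarith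
  have hE2 : Real.exp (2 * τ) = A ^ 2 := by rw [hAdef, two_mul, Real.exp_add]; ring
  have hEneg : Real.exp (-τ) = A⁻¹ := by rw [hAdef, Real.exp_neg]
  have hEneg2 : Real.exp (-2 * τ) = (A ^ 2)⁻¹ := by rw [neg_mul, Real.exp_neg, hE2]
  have hS : (0:ℝ) < η ^ 2 + A ^ 2 - 1 := by nlinarith
  have hA1 : (0:ℝ) < A ^ 2 - 1 := by nlinarith
  set K := η ^ 2 * (A ^ 2 - 1) / (η ^ 2 + A ^ 2 - 1) + 1 with hKdef
  have hKgt : 1 < K := by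
    have : (0:ℝ) < η ^ 2 * (A ^ 2 - 1) / (η ^ 2 + A ^ 2 - 1) := by positivity
    rw [hKdef]; linarith
  have hK0 : (0:ℝ) < K := by linarith
  have hKexp : Real.exp (2 * τt) = K := by
    rw [hτt, hE2, ← hKdef, show (2:ℝ) * (1 / 2 * Real.log K) = Real.log K by ring,
      Real.exp_log hK0]
  have hEnegt2 : Real.exp (-2 * τt) = K⁻¹ := by rw [neg_mul, Real.exp_neg, hKexp]
  have hB2 : Real.exp (-τt) ^ 2 = K⁻¹ := by
    rw [sq, ← Real.exp_add, show -τt + -τt = -2 * τt by ring, hEnegt2]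
  have hvt : (0:ℝ) < 1 - K⁻¹ := by
    have : K⁻¹ < 1 := inv_lt_one_of_one_lt₀ hKgt
    linarith
  have hv : (0:ℝ) < 1 - (A ^ 2)⁻¹ := by
    have h1 : (1:ℝ) < A ^ 2 := by nlinarith
    have : (A ^ 2)⁻¹ < 1 := inv_lt_one_of_one_lt₀ h1
    linarith
  set C0 := (2 * Real.pi * (1 - (A ^ 2)⁻¹)) ^ (-(d:ℝ) / 2) with hC0def
  set C1 := (2 * Real.pi * (1 - K⁻¹)) ^ ((d:ℝ) / 2) with hC1def
  have hC0 : 0 < C0 := Real.rpow_pos_of_pos (by positivity) _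
  have hC1 : 0 < C1 := Real.rpow_pos_of_pos (by positivity) _
  refine ⟨Z⁻¹ * C0 * C1, by positivity, fun x => ?_⟩
  set Emid := Real.exp (-(Real.exp (2 * τ) * ‖x‖ ^ 2) /
    (2 * (η ^ 2 + Real.exp (2 * τ) - 1))) with hEmiddef
  set tgt := Real.exp (-τt) • xn
    + (Real.exp (τ - τt) * η ^ 2 / (η ^ 2 + Real.exp (2 * τ) - 1)) • x with htgtdef
  have hpoint : ∀ z : EuclideanSpace ℝ (Fin d),
      Real.exp (-‖z - xn‖ ^ 2 / (2 * η ^ 2)) *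
        gaussDensity d (1 - Real.exp (-2 * τ)) (x - Real.exp (-τ) • (z - xn))
      = (C0 * C1 * Emid) *
        gaussDensity d (1 - Real.exp (-2 * τt)) (tgt - Real.exp (-τt) • z) := by
    intro z
    have hnorm1 : ‖x - Real.exp (-τ) • (z - xn)‖ ^ 2
        = ‖x‖ ^ 2 - 2 * A⁻¹ * (inner ℝ x (z - xn) : ℝ) + (A⁻¹) ^ 2 * ‖z - xn‖ ^ 2 := by
      rw [hEneg, norm_sub_sq_real, real_inner_smul_right, norm_smul, mul_pow,
        Real.norm_eq_abs, abs_of_pos (inv_pos.2 hA0)]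
      ring
    have hptarg : tgt - Real.exp (-τt) • z
        = Real.exp (-τt) • ((xn - z) + (A * η ^ 2 / (η ^ 2 + A ^ 2 - 1)) • x) := by
      rw [htgtdef, hE2, show Real.exp (τ - τt) = A * Real.exp (-τt) by
        rw [sub_eq_add_neg, Real.exp_add, hAdef], smul_add, smul_sub, smul_smul]
      module
    have hnorm2 : ‖tgt - Real.exp (-τt) • z‖ ^ 2
        = K⁻¹ * (‖z - xn‖ ^ 2
            - 2 * (A * η ^ 2 / (η ^ 2 + A ^ 2 - 1)) * (inner ℝ x (z - xn) : ℝ)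
            + (A * η ^ 2 / (η ^ 2 + A ^ 2 - 1)) ^ 2 * ‖x‖ ^ 2) := by
      rw [hptarg, norm_smul, mul_pow, Real.norm_eq_abs,
        abs_of_pos (Real.exp_pos (-τt)), hB2, norm_add_sq_real, real_inner_smul_right,
        norm_smul, Real.norm_eq_abs, mul_pow, ← norm_sub_rev z xn]
      have : (inner ℝ (xn - z) x : ℝ) = -(inner ℝ x (z - xn) : ℝ) := by
        rw [real_inner_comm, ← inner_neg_right, neg_sub]
      rw [this, abs_of_pos (by positivity : (0:ℝ) < A * η ^ 2 / (η ^ 2 + A ^ 2 - 1))]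
      ring
    unfold gaussDensity
    rw [hEneg2, hEnegt2, hnorm1, hnorm2, hEmiddef, hE2]
    have hone : C1 * (2 * Real.pi * (1 - K⁻¹)) ^ (-(d:ℝ) / 2) = 1 := by
      rw [hC1def, ← Real.rpow_add (by positivity),
        show (d:ℝ) / 2 + -(d:ℝ) / 2 = 0 by ring, Real.rpow_zero]
    have halg := key_alg η A K (‖z - xn‖ ^ 2) (‖x‖ ^ 2) (inner ℝ x (z - xn) : ℝ) hη hA hKdef
    have hE : Real.exp (-‖z - xn‖ ^ 2 / (2 * η ^ 2)) *
          Real.exp (-(‖x‖ ^ 2 - 2 * A⁻¹ * (inner ℝ x (z - xn) : ℝ)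
            + (A⁻¹) ^ 2 * ‖z - xn‖ ^ 2) / (2 * (1 - (A ^ 2)⁻¹)))
        = Real.exp (-(A ^ 2 * ‖x‖ ^ 2) / (2 * (η ^ 2 + A ^ 2 - 1))) *
          Real.exp (-(K⁻¹ * (‖z - xn‖ ^ 2
              - 2 * (A * η ^ 2 / (η ^ 2 + A ^ 2 - 1)) * (inner ℝ x (z - xn) : ℝ)
              + (A * η ^ 2 / (η ^ 2 + A ^ 2 - 1)) ^ 2 * ‖x‖ ^ 2)) / (2 * (1 - K⁻¹))) := by
      rw [← Real.exp_add, ← Real.exp_add, halg]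
    calc Real.exp (-‖z - xn‖ ^ 2 / (2 * η ^ 2)) *
          ((2 * Real.pi * (1 - (A ^ 2)⁻¹)) ^ (-(d:ℝ) / 2) *
            Real.exp (-(‖x‖ ^ 2 - 2 * A⁻¹ * (inner ℝ x (z - xn) : ℝ)
              + (A⁻¹) ^ 2 * ‖z - xn‖ ^ 2) / (2 * (1 - (A ^ 2)⁻¹))))
        = C0 * (Real.exp (-‖z - xn‖ ^ 2 / (2 * η ^ 2)) *
            Real.exp (-(‖x‖ ^ 2 - 2 * A⁻¹ * (inner ℝ x (z - xn) : ℝ)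
              + (A⁻¹) ^ 2 * ‖z - xn‖ ^ 2) / (2 * (1 - (A ^ 2)⁻¹)))) := by
          rw [hC0def]; ring
      _ = C0 * ((C1 * (2 * Real.pi * (1 - K⁻¹)) ^ (-(d:ℝ) / 2)) *
            (Real.exp (-(A ^ 2 * ‖x‖ ^ 2) / (2 * (η ^ 2 + A ^ 2 - 1))) *
              Real.exp (-(K⁻¹ * (‖z - xn‖ ^ 2
                - 2 * (A * η ^ 2 / (η ^ 2 + A ^ 2 - 1)) * (inner ℝ x (z - xn) : ℝ)
                + (A * η ^ 2 / (η ^ 2 + A ^ 2 - 1)) ^ 2 * ‖x‖ ^ 2)) / (2 * (1 - K⁻¹))))) := by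
          rw [hone, one_mul, hE]
      _ = C0 * C1 * Real.exp (-(A ^ 2 * ‖x‖ ^ 2) / (2 * (η ^ 2 + A ^ 2 - 1))) *
            ((2 * Real.pi * (1 - K⁻¹)) ^ (-(d:ℝ) / 2) *
              Real.exp (-(K⁻¹ * (‖z - xn‖ ^ 2
                - 2 * (A * η ^ 2 / (η ^ 2 + A ^ 2 - 1)) * (inner ℝ x (z - xn) : ℝ)
                + (A * η ^ 2 / (η ^ 2 + A ^ 2 - 1)) ^ 2 * ‖x‖ ^ 2)) / (2 * (1 - K⁻¹)))) := by
          ring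
  calc pZMarginal p η xn τ x
      = ∫ w, Z⁻¹ * (p (w + xn) * (Real.exp (-‖w‖ ^ 2 / (2 * η ^ 2)) *
          gaussDensity d (1 - Real.exp (-2 * τ)) (x - Real.exp (-τ) • w))) := by
        unfold pZMarginal pZ
        rw [← hZdef]
        congr 1; funext w; ring
    _ = Z⁻¹ * ∫ w, p (w + xn) * (Real.exp (-‖w‖ ^ 2 / (2 * η ^ 2)) *
          gaussDensity d (1 - Real.exp (-2 * τ)) (x - Real.exp (-τ) • w)) :=
        integral_const_mul _ _
    _ = Z⁻¹ * ∫ z, p z * (Real.exp (-‖z - xn‖ ^ 2 / (2 * η ^ 2)) *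
          gaussDensity d (1 - Real.exp (-2 * τ)) (x - Real.exp (-τ) • (z - xn))) := by
        congr 1
        rw [← integral_sub_right_eq_self (fun w => p (w + xn) *
          (Real.exp (-‖w‖ ^ 2 / (2 * η ^ 2)) *
            gaussDensity d (1 - Real.exp (-2 * τ)) (x - Real.exp (-τ) • w))) xn]
        congr 1; funext z; simp
    _ = Z⁻¹ * ∫ z, (C0 * C1 * Emid) *
          (p z * gaussDensity d (1 - Real.exp (-2 * τt)) (tgt - Real.exp (-τt) • z)) := by
        congr 1
        congr 1; funext z
        rw [hpoint z]
        ring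
    _ = Z⁻¹ * ((C0 * C1 * Emid) * pOU p τt tgt) := by
        rw [integral_const_mul]; rfl
    _ = Z⁻¹ * C0 * C1 * Emid * pOU p τt tgt := by ring
end
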